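/- For any continuous potential A: Σ̂ → ℝ, the maximal value β_A = max over holonomic probabilities μ̂ of ∫ A dμ̂ equals inf over continuous f: Σ → ℝ of max over (y,x) ∈ Σ̂ of [A(y,x) + f(x) − f(τ_y(x))]. -/

import Mathlib

open MeasureTheory

section AubryMather

variable {r : ℕ} {M : Fin r → Fin r → Bool}

/-- One-sided subshift of finite type on `r` symbols with transition matrix `M`. -/
abbrev SigSp (r : ℕ) (M : Fin r → Fin r → Bool) :=
  {x : ℕ → Fin r // ∀ j, M (x j) (x (j + 1)) = true}

/-- The dual subshift, with transposed transition matrix (coordinates `(…, y₁, y₀)`). -/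
abbrev DualSp (r : ℕ) (M : Fin r → Fin r → Bool) :=
  {y : ℕ → Fin r // ∀ j, M (y (j + 1)) (y j) = true}

/-- The natural extension `Σ̂ ⊂ Σ* × Σ`: pairs `(y,x)` with `M (y₀, x₀) = 1`. -/
abbrev NatExt (r : ℕ) (M : Fin r → Fin r → Bool) :=
  {p : DualSp r M × SigSp r M // M (p.1.1 0) (p.2.1 0) = true}

/-- Prepend a symbol to a sequence. -/
def prepend (a : Fin r) (x : ℕ → Fin r) : ℕ → Fin r
  | 0 => a
  | m + 1 => x m

/-- The left shift `σ` on `Σ`. -/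
def shiftS (x : SigSp r M) : SigSp r M := ⟨fun n => x.1 (n + 1), fun j => x.2 (j + 1)⟩

/-- The projection `π₁(y,x) = x`. -/
def proj1 (p : NatExt r M) : SigSp r M := p.1.2

/-- `τ(y,x) = τ_y(x) = (y₀, x₀, x₁, …)`. -/
def tau (p : NatExt r M) : SigSp r M :=
  ⟨prepend (p.1.1.1 0) p.1.2.1, by
    intro j
    cases j with
    | zero => exact p.2
    | succ m => exact p.1.2.2 m⟩

/-- The two-sided shift `σ̂` on the natural extension. -/
def hatShift (p : NatExt r M) : NatExt r M :=
  ⟨(⟨prepend (p.1.2.1 0) p.1.1.1, by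
      intro j
      cases j with
      | zero => exact p.2
      | succ m => exact p.1.1.2 m⟩, shiftS p.1.2), p.1.2.2 0⟩

/-- Holonomic probability measures on `Σ̂`. -/
def Holonomic (μ : Measure (NatExt r M)) : Prop :=
  IsProbabilityMeasure μ ∧
    ∀ f : C(SigSp r M, ℝ), (∫ p, f (tau p) ∂μ) = ∫ p, f (proj1 p) ∂μ

/-- `β_A`, the maximal holonomic value of the potential `A`. -/
noncomputable def betaA (A : NatExt r M → ℝ) : ℝ :=
  ⨆ μ : {μ : Measure (NatExt r M) // Holonomic μ}, ∫ p, A p ∂(μ.1)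

open Classical in
/-- The metric `d(x, x̄) = λ^{min {j : x_j ≠ x̄_j}}` on `Σ`. -/
noncomputable def dS (lam : ℝ) (x x' : SigSp r M) : ℝ :=
  if h : x.1 = x'.1 then 0
  else lam ^ Nat.find (show ∃ j, x.1 j ≠ x'.1 j from Function.ne_iff.mp h)

open Classical in
/-- The analogous metric on `Σ*`. -/
noncomputable def dDual (lam : ℝ) (y y' : DualSp r M) : ℝ :=
  if h : y.1 = y'.1 then 0
  else lam ^ Nat.find (show ∃ j, y.1 j ≠ y'.1 j from Function.ne_iff.mp h)

/-- The metric on `Σ̂ ⊂ Σ* × Σ`. -/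
noncomputable def dHat (lam : ℝ) (p q : NatExt r M) : ℝ :=
  max (dDual lam p.1.1 q.1.1) (dS lam p.1.2 q.1.2)

/-- `u` is `θ`-Hölder on `Σ` with constant `C`. -/
def HolderOnSig (lam θ C : ℝ) (u : SigSp r M → ℝ) : Prop :=
  ∀ x x', |u x - u x'| ≤ C * (dS lam x x') ^ θ

/-- `A` is `θ`-Hölder on `Σ̂` with constant `C`. -/
def HolderOnExt (lam θ C : ℝ) (A : NatExt r M → ℝ) : Prop :=
  ∀ p q, |A p - A q| ≤ C * (dHat lam p q) ^ θ

/-- `(Σ,σ)` is (topologically) transitive. -/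
def TransitiveShift (r : ℕ) (M : Fin r → Fin r → Bool) : Prop :=
  ∀ U V : Set (SigSp r M), IsOpen U → IsOpen V → U.Nonempty → V.Nonempty →
    ∃ n : ℕ, (shiftS^[n] '' U ∩ V).Nonempty

/-- `(Σ,σ)` is topologically mixing. -/
def MixingShift (r : ℕ) (M : Fin r → Fin r → Bool) : Prop :=
  ∀ U V : Set (SigSp r M), IsOpen U → IsOpen V → U.Nonempty → V.Nonempty →
    ∃ K : ℕ, ∀ k > K, (shiftS^[k] '' U ∩ V).Nonempty

/-- A chain of length `k` starting at `x`: `x⁰ = x`, `x^{j+1} = τ_{yʲ}(xʲ)`. -/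
def IsChainFrom (x : SigSp r M) (k : ℕ) (p : ℕ → NatExt r M) : Prop :=
  (1 ≤ k → proj1 (p 0) = x) ∧ ∀ j, j + 1 < k → proj1 (p (j + 1)) = tau (p j)

/-- A path in `P(x, x̄, ε)`: begins at `x̄`, ends within `ε` of `x`. -/
def InPath (lam ε : ℝ) (x xbar : SigSp r M) (k : ℕ) (p : ℕ → NatExt r M) : Prop :=
  1 ≤ k ∧ proj1 (p 0) = xbar ∧ (∀ j, j + 1 < k → proj1 (p (j + 1)) = tau (p j)) ∧
    dS lam (tau (p (k - 1))) x < ε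

/-- `S_A^ε(x, x̄)`. -/
noncomputable def SAeps (lam : ℝ) (A : NatExt r M → ℝ) (ε : ℝ) (x xbar : SigSp r M) : EReal :=
  sInf {v : EReal | ∃ k p, InPath lam ε x xbar k p ∧
    v = ((- ∑ j ∈ Finset.range k, (A (p j) - betaA A) : ℝ) : EReal)}

/-- The Mañé potential `S_A(x, x̄) = lim_{ε→0} S_A^ε(x, x̄)`. -/
noncomputable def ManePot (lam : ℝ) (A : NatExt r M → ℝ) (x xbar : SigSp r M) : EReal :=
  ⨆ (ε : ℝ) (_ : 0 < ε), SAeps lam A ε x xbar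

/-- `x` is non-wandering with respect to `A`. -/
def NonWand (lam : ℝ) (A : NatExt r M → ℝ) (x : SigSp r M) : Prop :=
  ∀ ε > 0, ∃ k p, InPath lam ε x x k p ∧
    |∑ j ∈ Finset.range k, (A (p j) - betaA A)| < ε

/-- `x` is `u`-connected to `x̄`. -/
def UConnected (lam : ℝ) (A : NatExt r M → ℝ) (u : SigSp r M → ℝ)
    (x xbar : SigSp r M) : Prop :=
  ∀ ε > 0, ∃ k p, InPath lam ε x xbar k p ∧
    |∑ j ∈ Finset.range k, (A (p j) - betaA A) - (u x - u xbar)| < ε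

/-- A (continuous) sub-action for `A`. -/
def SubAction (A : NatExt r M → ℝ) (u : SigSp r M → ℝ) : Prop :=
  Continuous u ∧ ∀ p : NatExt r M, u (proj1 p) ≤ u (tau p) - A p + betaA A

/-- A calibrated sub-action for `A`:
`u(x) = min_{y ∈ Σ*_x} [u(τ_y(x)) − A(y,x) + β_A]`. -/
def Calibrated (A : NatExt r M → ℝ) (u : SigSp r M → ℝ) : Prop :=
  Continuous u ∧ ∀ x : SigSp r M,
    IsLeast {v : ℝ | ∃ p : NatExt r M, proj1 p = x ∧ v = u (tau p) - A p + betaA A} (u x)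

/-- The candidate maximal sub-action `u_A` (for `β_A = 0`). -/
noncomputable def uMax (A : NatExt r M → ℝ) (x : SigSp r M) : ℝ :=
  sInf {v : ℝ | ∃ k p, IsChainFrom x k p ∧ v = -∑ j ∈ Finset.range k, A (p j)}

/-- The operator `L_ρ(f)(x) = ρ · min_{y ∈ Σ*_x} [f(τ_y(x)) − A(y,x)]`. -/
noncomputable def Lrho (A : NatExt r M → ℝ) (rho : ℝ) (f : SigSp r M → ℝ)
    (x : SigSp r M) : ℝ :=
  rho * sInf {v : ℝ | ∃ p : NatExt r M, proj1 p = x ∧ v = f (tau p) - A p}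

end AubryMather

/-- The (topological) support of a measure. -/
def msupport {X : Type*} [TopologicalSpace X] [MeasurableSpace X]
    (μ : MeasureTheory.Measure X) : Set X :=
  {p | ∀ U : Set X, IsOpen U → p ∈ U → 0 < μ U}


namespace DFP

open Finset

variable {r : ℕ} {M : Fin r → Fin r → Bool}

/-! ### Instances -/

lemma isClosed_sig : IsClosed {x : ℕ → Fin r | ∀ j, M (x j) (x (j + 1)) = true} := by
  have h : {x : ℕ → Fin r | ∀ j, M (x j) (x (j + 1)) = true} =
      ⋂ j, (fun x : ℕ → Fin r => (x j, x (j + 1))) ⁻¹'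
        {q : Fin r × Fin r | M q.1 q.2 = true} := by
    ext x; simp [Set.mem_iInter]
  rw [h]
  exact isClosed_iInter fun j =>
    (isClosed_discrete _).preimage ((continuous_apply j).prodMk (continuous_apply (j + 1)))

lemma isClosed_dual : IsClosed {y : ℕ → Fin r | ∀ j, M (y (j + 1)) (y j) = true} := by
  have h : {y : ℕ → Fin r | ∀ j, M (y (j + 1)) (y j) = true} =
      ⋂ j, (fun y : ℕ → Fin r => (y (j + 1), y j)) ⁻¹'
        {q : Fin r × Fin r | M q.1 q.2 = true} := by
    ext y; simp [Set.mem_iInter]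
  rw [h]
  exact isClosed_iInter fun j =>
    (isClosed_discrete _).preimage ((continuous_apply (j + 1)).prodMk (continuous_apply j))

instance : CompactSpace (SigSp r M) :=
  isCompact_iff_compactSpace.mp (isClosed_sig.isCompact)

instance : CompactSpace (DualSp r M) :=
  isCompact_iff_compactSpace.mp (isClosed_dual.isCompact)

lemma isClosed_ext : IsClosed {p : DualSp r M × SigSp r M | M (p.1.1 0) (p.2.1 0) = true} := by
  have hc : Continuous fun p : DualSp r M × SigSp r M => (p.1.1 0, p.2.1 0) :=
    (((continuous_apply 0).comp (continuous_subtype_val.comp continuous_fst)).prodMk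
      ((continuous_apply 0).comp (continuous_subtype_val.comp continuous_snd)))
  exact (isClosed_discrete {q : Fin r × Fin r | M q.1 q.2 = true}).preimage hc

instance : CompactSpace (NatExt r M) :=
  isCompact_iff_compactSpace.mp (isClosed_ext.isCompact)

instance : SecondCountableTopology (SigSp r M) :=
  TopologicalSpace.secondCountableTopology_induced _ _ Subtype.val

instance : SecondCountableTopology (DualSp r M) :=
  TopologicalSpace.secondCountableTopology_induced _ _ Subtype.val

instance : BorelSpace (SigSp r M) := Subtype.borelSpace _
instance : BorelSpace (DualSp r M) := Subtype.borelSpace _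
instance : BorelSpace (NatExt r M) := Subtype.borelSpace _

lemma cont_proj1 : Continuous (proj1 : NatExt r M → SigSp r M) :=
  continuous_snd.comp continuous_subtype_val

lemma cont_tau : Continuous (tau : NatExt r M → SigSp r M) := by
  apply Continuous.subtype_mk
  apply continuous_pi
  intro i
  cases i with
  | zero =>
    exact (continuous_apply 0).comp
      (continuous_subtype_val.comp (continuous_fst.comp continuous_subtype_val))
  | succ m =>
    exact (continuous_apply m).comp
      (continuous_subtype_val.comp (continuous_snd.comp continuous_subtype_val))

lemma cont_integrable {g : NatExt r M → ℝ} (hg : Continuous g) (ν : Measure (NatExt r M))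
    [IsFiniteMeasure ν] : Integrable g ν :=
  hg.integrable_of_hasCompactSupport (HasCompactSupport.of_compactSpace g)

end DFP


namespace DFP

open Finset

variable {r : ℕ} {M : Fin r → Fin r → Bool}

/-! ### Windows -/

/-- Vertex type: words of length `N+2`. -/
abbrev Vtx (r N : ℕ) := Fin (N + 2) → Fin r

abbrev Wrd (r N : ℕ) := Vtx r N × Vtx r N

def Wdw (N : ℕ) (p : NatExt r M) : Wrd r N :=
  (fun i => p.1.1.1 i, fun i => p.1.2.1 i)

def wsrc {N : ℕ} (e : Wrd r N) : Vtx r N := e.2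

def wtgt {N : ℕ} (e : Wrd r N) : Vtx r N :=
  Fin.cons (e.1 0) (fun i : Fin (N + 1) => e.2 i.castSucc)

def fstW (N : ℕ) (x : SigSp r M) : Vtx r N := fun i => x.1 i

lemma fstW_proj1 (N : ℕ) (p : NatExt r M) : fstW N (proj1 p) = wsrc (Wdw N p) := rfl

lemma fstW_tau (N : ℕ) (p : NatExt r M) : fstW N (tau p) = wtgt (Wdw N p) := by
  funext i
  refine Fin.cases ?_ ?_ i
  · rfl
  · intro j
    show (tau p).1 (j.succ : Fin (N+2)).val = _
    rw [wtgt, Fin.cons_succ]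
    rfl

lemma cont_fstW (N : ℕ) : Continuous (fstW N : SigSp r M → Vtx r N) :=
  continuous_pi fun i => (continuous_apply (i : ℕ)).comp continuous_subtype_val

lemma cont_Wdw (N : ℕ) : Continuous (Wdw N : NatExt r M → Wrd r N) := by
  apply Continuous.prodMk
  · exact continuous_pi fun i => (continuous_apply (i : ℕ)).comp
      (continuous_subtype_val.comp (continuous_fst.comp continuous_subtype_val))
  · exact continuous_pi fun i => (continuous_apply (i : ℕ)).comp
      (continuous_subtype_val.comp (continuous_snd.comp continuous_subtype_val))

/-- Uniform continuity: potentials are approximately window-determined. -/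
lemma exists_window (A : NatExt r M → ℝ) (hA : Continuous A) {ε : ℝ} (hε : 0 < ε) :
    ∃ N : ℕ, ∀ p q : NatExt r M, Wdw N p = Wdw N q → |A p - A q| ≤ ε := by
  by_contra hcon
  push_neg at hcon
  set K : ℕ → Set (NatExt r M × NatExt r M) := fun N =>
    {pq | Wdw N pq.1 = Wdw N pq.2 ∧ ε ≤ |A pq.1 - A pq.2|} with hK
  have hcl : ∀ N, IsClosed (K N) := by
    intro N
    apply IsClosed.inter
    · exact isClosed_eq ((cont_Wdw N).comp continuous_fst) ((cont_Wdw N).comp continuous_snd)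
    · exact isClosed_le continuous_const
        (((hA.comp continuous_fst).sub (hA.comp continuous_snd)).abs)
  have hne : ∀ N, (K N).Nonempty := by
    intro N
    obtain ⟨p, q, h1, h2⟩ := hcon N
    exact ⟨(p, q), h1, h2.le⟩
  have hmono : ∀ N, K (N + 1) ⊆ K N := by
    intro N pq hpq
    have h1 := hpq.1
    refine ⟨Prod.ext_iff.mpr ⟨funext fun i => ?_, funext fun i => ?_⟩, hpq.2⟩
    · show pq.1.1.1.1 (i : ℕ) = pq.2.1.1.1 (i : ℕ)
      exact congrFun (congrArg Prod.fst h1) ⟨(i : ℕ), by omega⟩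
    · show pq.1.1.2.1 (i : ℕ) = pq.2.1.2.1 (i : ℕ)
      exact congrFun (congrArg Prod.snd h1) ⟨(i : ℕ), by omega⟩
  have hcompact : ∀ N, IsCompact (K N) := fun N => (hcl N).isCompact
  obtain ⟨pq, hpq⟩ := IsCompact.nonempty_iInter_of_sequence_nonempty_isCompact_isClosed
    K hmono hne (hcompact 0) hcl
  have heq : pq.1 = pq.2 := by
    have hy : ∀ m : ℕ, pq.1.1.1.1 m = pq.2.1.1.1 m := by
      intro m
      have := (Set.mem_iInter.mp hpq m).1
      exact congrFun (congrArg Prod.fst this) ⟨m, by omega⟩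
    have hx : ∀ m : ℕ, pq.1.1.2.1 m = pq.2.1.2.1 m := by
      intro m
      have := (Set.mem_iInter.mp hpq m).1
      exact congrFun (congrArg Prod.snd this) ⟨m, by omega⟩
    apply Subtype.ext
    apply Prod.ext
    · exact Subtype.ext (funext hy)
    · exact Subtype.ext (funext hx)
  have := (Set.mem_iInter.mp hpq 0).2
  rw [heq] at this
  simp at this
  linarith

/-! ### The finite graph -/

def ESet (M : Fin r → Fin r → Bool) (N : ℕ) : Set (Wrd r N) :=
  Set.range (Wdw N : NatExt r M → Wrd r N)

lemma edge_x_adm {N : ℕ} {e : Wrd r N} (he : e ∈ ESet M N) (i : Fin (N + 1)) :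
    M (e.2 i.castSucc) (e.2 i.succ) = true := by
  obtain ⟨p, rfl⟩ := he
  exact p.1.2.2 i

lemma edge_pair {N : ℕ} {e : Wrd r N} (he : e ∈ ESet M N) :
    M (e.1 0) (e.2 0) = true := by
  obtain ⟨p, rfl⟩ := he
  exact p.2

def stepB (p : NatExt r M) : NatExt r M :=
  ⟨(⟨fun n => p.1.1.1 (n + 1), fun j => p.1.1.2 (j + 1)⟩, tau p), p.1.1.2 0⟩

lemma proj1_stepB (p : NatExt r M) : proj1 (stepB p) = tau p := rfl

lemma wsrc_Wdw_stepB (N : ℕ) (p : NatExt r M) :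
    wsrc (Wdw N (stepB p)) = wtgt (Wdw N p) := fstW_tau N p

lemma edge_succ {N : ℕ} {e : Wrd r N} (he : e ∈ ESet M N) :
    ∃ e' ∈ ESet M N, wsrc e' = wtgt e := by
  obtain ⟨p, rfl⟩ := he
  exact ⟨Wdw N (stepB p), Set.mem_range_self _, wsrc_Wdw_stepB N p⟩

/-- Cycles in the finite graph. -/
def IsCyc (M : Fin r → Fin r → Bool) (N k : ℕ) (q : ℕ → Wrd r N) : Prop :=
  1 ≤ k ∧ (∀ i < k, q i ∈ ESet M N) ∧
    (∀ i, i + 1 < k → wsrc (q (i + 1)) = wtgt (q i)) ∧ wsrc (q 0) = wtgt (q (k - 1))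

lemma exists_cyc (N : ℕ) [h : Nonempty (NatExt r M)] : ∃ k q, IsCyc M N k q := by
  obtain ⟨p0⟩ := h
  set seq : ℕ → Wrd r N := fun n => Wdw N (stepB^[n] p0) with hseq
  have hmem : ∀ n, seq n ∈ ESet M N := fun n => Set.mem_range_self _
  have hstep : ∀ n, wsrc (seq (n + 1)) = wtgt (seq n) := by
    intro n
    rw [hseq]
    simp only [Function.iterate_succ_apply']
    exact wsrc_Wdw_stepB N _
  obtain ⟨i, j, hne, hij⟩ :=
    Fintype.exists_ne_map_eq_of_card_lt
      (fun i : Fin (Fintype.card (Wrd r N) + 1) => seq i) (by simp)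
  have key : ∀ a b : ℕ, a < b → seq a = seq b → ∃ k q, IsCyc M N k q := by
    intro a b hab heq2
    refine ⟨b - a, fun m => seq (a + m), by omega, fun m _ => hmem _, ?_, ?_⟩
    · intro m _
      show wsrc (seq (a + (m + 1))) = wtgt (seq (a + m))
      have h1 : a + (m + 1) = (a + m) + 1 := by omega
      rw [h1]
      exact hstep _
    · show wsrc (seq (a + 0)) = wtgt (seq (a + (b - a - 1)))
      have h1 : (a + (b - a - 1)) + 1 = b := by omega
      have h2 := hstep (a + (b - a - 1))
      rw [h1] at h2
      rw [Nat.add_zero, heq2]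
      exact h2
  rcases lt_or_gt_of_ne hne with hlt | hlt
  · exact key i j hlt hij
  · exact key j i hlt hij.symm

end DFP

namespace DFP

open Finset
open scoped ENNReal NNReal

variable {r : ℕ} {M : Fin r → Fin r → Bool}

/-! ### Weights -/

open Classical in
noncomputable def wgt (A : NatExt r M → ℝ) (N : ℕ) : Wrd r N → ℝ := fun e =>
  if h : ∃ p : NatExt r M, Wdw N p = e then A h.choose else 0

lemma wgt_close {A : NatExt r M → ℝ} {N : ℕ} {ε : ℝ}
    (hN : ∀ p q : NatExt r M, Wdw N p = Wdw N q → |A p - A q| ≤ ε)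
    (p : NatExt r M) : |wgt A N (Wdw N p) - A p| ≤ ε := by
  have h : ∃ q : NatExt r M, Wdw N q = Wdw N p := ⟨p, rfl⟩
  rw [wgt]
  rw [dif_pos h]
  exact hN _ _ h.choose_spec

lemma wgt_bound {A : NatExt r M → ℝ} {N : ℕ} {CA : ℝ} (hCA : ∀ p, |A p| ≤ CA) (hCA0 : 0 ≤ CA)
    (e : Wrd r N) : |wgt A N e| ≤ CA := by
  rw [wgt]
  split
  · exact hCA _
  · simpa using hCA0

/-! ### From cycles to holonomic measures -/

lemma cyc_measure (A : NatExt r M → ℝ) (hA : Continuous A) {ε : ℝ} {N k : ℕ} {q : ℕ → Wrd r N}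
    (hN : ∀ p q : NatExt r M, Wdw N p = Wdw N q → |A p - A q| ≤ ε)
    (hc : IsCyc M N k q) :
    ∃ μ : Measure (NatExt r M), Holonomic μ ∧
      (∑ i ∈ Finset.range k, wgt A N (q i)) / k - ε ≤ ∫ p, A p ∂μ := by
  obtain ⟨hk1, hmem, hcons, hclose⟩ := hc
  haveI : NeZero k := ⟨by omega⟩
  set Q : ZMod k → Wrd r N := fun z => q z.val with hQdef
  have hQE : ∀ z, Q z ∈ ESet M N := fun z => hmem _ (ZMod.val_lt z)
  -- cyclic edge relation
  have hQ : ∀ z, wsrc (Q (z + 1)) = wtgt (Q z) := by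
    intro z
    have hzv : z.val < k := ZMod.val_lt z
    have hzz : ((z.val : ℕ) : ZMod k) = z := ZMod.natCast_rightInverse z
    have hcast : ((z.val + 1 : ℕ) : ZMod k) = z + 1 := by
      rw [Nat.cast_add, Nat.cast_one, hzz]
    have hval : (z + 1).val = (z.val + 1) % k := by
      rw [← hcast, ZMod.val_natCast]
    by_cases h : z.val + 1 < k
    · have : (z + 1).val = z.val + 1 := by rw [hval, Nat.mod_eq_of_lt h]
      show wsrc (q (z + 1).val) = wtgt (q z.val)
      rw [this]
      exact hcons _ h
    · have hz : z.val = k - 1 := by omega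
      have : (z + 1).val = 0 := by
        rw [hval, show z.val + 1 = k by omega, Nat.mod_self]
      show wsrc (q (z + 1).val) = wtgt (q z.val)
      rw [this, hz]
      exact hclose
  set aa : ZMod k → Fin r := fun z => (Q z).2 0 with haadef
  have haa1 : ∀ z, aa (z + 1) = (Q z).1 0 := by
    intro z
    have := congrFun (hQ z) 0
    rw [wtgt] at this
    simpa [wsrc, aa] using this
  have haa2 : ∀ (z : ZMod k) (i : Fin (N + 1)),
      (Q (z + 1)).2 i.succ = (Q z).2 i.castSucc := by
    intro z i
    have := congrFun (hQ z) i.succ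
    rw [wtgt, Fin.cons_succ] at this
    exact this
  -- x-window identity
  have hxw : ∀ (i : ℕ) (hi : i < N + 2) (z : ZMod k),
      (Q z).2 ⟨i, hi⟩ = aa (z - i) := by
    intro i
    induction i with
    | zero =>
      intro hi z
      show (Q z).2 0 = aa (z - (0 : ℕ))
      push_cast
      rw [sub_zero]
    | succ i ih =>
      intro hi z
      have h2 : (⟨i + 1, hi⟩ : Fin (N + 2)) = (⟨i, by omega⟩ : Fin (N + 1)).succ := rfl
      rw [h2]
      have h3 := haa2 (z - 1) ⟨i, by omega⟩
      rw [sub_add_cancel] at h3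
      rw [h3]
      have h4 : (⟨i, by omega⟩ : Fin (N + 1)).castSucc = (⟨i, by omega⟩ : Fin (N + 2)) := rfl
      rw [h4, ih (by omega) (z - 1)]
      congr 1
      push_cast
      ring
  -- adjacency for aa
  have haaM : ∀ z, M (aa z) (aa (z - 1)) = true := by
    intro z
    have h1 : aa (z - 1) = (Q z).2 ⟨1, by omega⟩ := by
      rw [hxw 1 (by omega) z]
      norm_num
    have h0 : aa z = (Q z).2 ⟨0, by omega⟩ := rfl
    rw [h0, h1]
    have := edge_x_adm (hQE z) ⟨0, by omega⟩
    exact this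
  -- the x-sequences
  have hxs_adm : ∀ z : ZMod k, ∀ j : ℕ,
      M (aa (z - j)) (aa (z - (j + 1 : ℕ))) = true := by
    intro z j
    have := haaM (z - j)
    have heq : z - ((j + 1 : ℕ) : ZMod k) = z - j - 1 := by push_cast; ring
    rw [heq]
    exact this
  set xs : ZMod k → SigSp r M := fun z => ⟨fun i => aa (z - i), fun j => hxs_adm z j⟩ with hxsdef
  -- realizers
  have hre : ∀ z, ∃ p : NatExt r M, Wdw N p = Q z := fun z => hQE z
  choose rp hrp using hre
  -- window facts for realizers
  have hrp1 : ∀ z (i : Fin (N + 2)), (rp z).1.1.1 i = (Q z).1 i := by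
    intro z i
    have := congrFun (congrArg Prod.fst (hrp z)) i
    exact this
  have hrp2 : ∀ z (i : Fin (N + 2)), (rp z).1.2.1 i = (Q z).2 i := by
    intro z i
    exact congrFun (congrArg Prod.snd (hrp z)) i
  have hPpf : ∀ z : ZMod k, M ((rp z).1.1.1 0) ((xs z).1 0) = true := by
    intro z
    have h2 : (xs z).1 0 = (Q z).2 0 := by
      show aa (z - ((0 : ℕ) : ZMod k)) = (Q z).2 0
      rw [Nat.cast_zero, sub_zero]
    have h1 : (rp z).1.1.1 0 = (Q z).1 0 := hrp1 z 0
    rw [h2, h1]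
    exact edge_pair (hQE z)
  set P : ZMod k → NatExt r M := fun z => ⟨((rp z).1.1, xs z), hPpf z⟩ with hPdef
  -- window of P
  have hWP : ∀ z, Wdw N (P z) = Q z := by
    intro z
    refine Prod.ext_iff.mpr ⟨funext fun i => ?_, funext fun i => ?_⟩
    · exact hrp1 z i
    · show (xs z).1 (i : ℕ) = (Q z).2 i
      have : (xs z).1 (i : ℕ) = aa (z - (i : ℕ)) := rfl
      rw [this, ← hxw (i : ℕ) i.isLt z]
  -- chain property
  have hchain : ∀ z, tau (P z) = proj1 (P (z + 1)) := by
    intro z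
    apply Subtype.ext
    funext j
    cases j with
    | zero =>
      show (rp z).1.1.1 0 = aa (z + 1 - (0 : ℕ))
      have h1 : z + 1 - ((0 : ℕ) : ZMod k) = z + 1 := by push_cast; ring
      rw [h1, haa1 z]
      exact hrp1 z 0
    | succ m =>
      show aa (z - m) = aa (z + 1 - ((m + 1 : ℕ) : ZMod k))
      congr 1
      push_cast
      ring
  -- the measure
  set μ : Measure (NatExt r M) :=
    ((k : ℝ≥0∞))⁻¹ • ∑ z : ZMod k, Measure.dirac (P z) with hμdef
  have hksum : (∑ z : ZMod k, (1 : ℝ≥0∞)) = (k : ℝ≥0∞) := by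
    rw [Finset.sum_const, Finset.card_univ, ZMod.card k, nsmul_eq_mul, mul_one]
  haveI hprob : IsProbabilityMeasure μ := by
    constructor
    rw [hμdef, Measure.smul_apply, Measure.coe_finset_sum]
    simp only [Finset.sum_apply, Measure.dirac_apply_of_mem (Set.mem_univ _)]
    rw [hksum, smul_eq_mul, ENNReal.inv_mul_cancel (Nat.cast_ne_zero.mpr (NeZero.ne k))
      (ENNReal.natCast_ne_top k)]
  -- integration formula
  have hint : ∀ g : NatExt r M → ℝ, Continuous g →
      ∫ p, g p ∂μ = (k : ℝ)⁻¹ * ∑ z : ZMod k, g (P z) := by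
    intro g hg
    rw [hμdef, integral_smul_measure, integral_finset_sum_measure
      (fun z _ => cont_integrable hg _)]
    simp only [integral_dirac]
    rw [ENNReal.toReal_inv, ENNReal.toReal_natCast]
    rfl
  refine ⟨μ, ⟨hprob, ?_⟩, ?_⟩
  · intro f
    rw [hint (fun p => f (tau p)) (f.continuous.comp cont_tau),
      hint (fun p => f (proj1 p)) (f.continuous.comp cont_proj1)]
    congr 1
    have : ∀ z : ZMod k, f (tau (P z)) = f (proj1 (P (z + 1))) := fun z => by rw [hchain z]
    calc (∑ z : ZMod k, f (tau (P z))) = ∑ z : ZMod k, f (proj1 (P (z + 1))) :=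
          Finset.sum_congr rfl fun z _ => this z
      _ = ∑ z : ZMod k, f (proj1 (P z)) :=
          Fintype.sum_equiv (Equiv.addRight (1 : ZMod k)) _ _ (fun z => rfl)
  · rw [hint A hA]
    have hstep : ∀ z : ZMod k, wgt A N (Q z) - ε ≤ A (P z) := by
      intro z
      have := wgt_close hN (P z)
      rw [hWP z] at this
      have habs := abs_le.mp this
      linarith [habs.1]
    have hsum : (∑ z : ZMod k, (wgt A N (Q z) - ε)) ≤ ∑ z : ZMod k, A (P z) :=
      Finset.sum_le_sum fun z _ => hstep z
    have hcard : (Finset.univ : Finset (ZMod k)).card = k := by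
      rw [Finset.card_univ, ZMod.card]
    have hsum2 : (∑ z : ZMod k, (wgt A N (Q z) - ε))
        = (∑ z : ZMod k, wgt A N (Q z)) - k * ε := by
      rw [Finset.sum_sub_distrib, Finset.sum_const, hcard]
      ring_nf
    -- identify the two sums
    have hsum3 : (∑ z : ZMod k, wgt A N (Q z)) = ∑ i ∈ Finset.range k, wgt A N (q i) := by
      apply Finset.sum_nbij' (i := fun (z : ZMod k) => z.val) (j := fun (i : ℕ) => (i : ZMod k))
      · intro z _; exact Finset.mem_range.mpr (ZMod.val_lt z)
      · intro i _; exact Finset.mem_univ _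
      · intro z _; exact ZMod.natCast_rightInverse z
      · intro i hi; exact ZMod.val_cast_of_lt (Finset.mem_range.mp hi)
      · intro z _; rfl
    have hkpos : (0 : ℝ) < k := by exact_mod_cast Nat.pos_of_ne_zero (NeZero.ne k)
    rw [← hsum3]
    rw [div_sub' (ne_of_gt hkpos)]
    rw [div_le_iff₀ hkpos]
    calc (∑ z : ZMod k, wgt A N (Q z)) - (k : ℝ) * ε
        = ∑ z : ZMod k, (wgt A N (Q z) - ε) := by rw [hsum2]
      _ ≤ ∑ z : ZMod k, A (P z) := hsum
      _ = ((k : ℝ)⁻¹ * ∑ z : ZMod k, A (P z)) * k := by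
          field_simp

end DFP

namespace DFP

open Finset

section Bellman

variable {V W : Type*} [Fintype V]

/-- Paths in an abstract finite-vertex graph. -/
def BPath (E : Set W) (s t : W → V) (k : ℕ) (q : ℕ → W) : Prop :=
  (∀ i < k, q i ∈ E) ∧ ∀ i, i + 1 < k → s (q (i + 1)) = t (q i)

lemma bellman (E : Set W) (s t : W → V) (c : W → ℝ) (lam C : ℝ) (w0 : W) (hC0 : 0 ≤ C)
    (hCE : ∀ e ∈ E, c e - lam ≤ C)
    (hcyc : ∀ k (q : ℕ → W), 1 ≤ k → BPath E s t k q → s (q 0) = t (q (k - 1)) →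
      (∑ i ∈ Finset.range k, (c (q i) - lam)) ≤ 0) :
    ∃ g : V → ℝ, ∀ e ∈ E, c e + g (s e) - g (t e) ≤ lam := by
  -- uniform bound on path sums
  have hbound : ∀ k, ∀ q : ℕ → W, BPath E s t k q →
      (∑ i ∈ Finset.range k, (c (q i) - lam)) ≤ (Fintype.card V : ℝ) * C := by
    intro k
    induction k using Nat.strong_induction_on with
    | _ k ih =>
      intro q hq
      by_cases hk : k ≤ Fintype.card V
      · calc ∑ i ∈ Finset.range k, (c (q i) - lam) ≤ ∑ _i ∈ Finset.range k, C :=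
              Finset.sum_le_sum fun i hi => hCE _ (hq.1 i (Finset.mem_range.mp hi))
          _ = (k : ℝ) * C := by rw [Finset.sum_const, Finset.card_range, nsmul_eq_mul]
          _ ≤ (Fintype.card V : ℝ) * C := by
              apply mul_le_mul_of_nonneg_right _ hC0
              exact_mod_cast hk
      · push_neg at hk
        have key : ∀ a b : ℕ, a < b → b < k → s (q a) = s (q b) →
            (∑ i ∈ Finset.range k, (c (q i) - lam)) ≤ (Fintype.card V : ℝ) * C := by
          intro a b hab hbk hsab
          set d := b - a with hd
          have hd1 : 1 ≤ d := by omega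
          have hadb : a + d = b := by omega
          set q' : ℕ → W := fun m => if m < a then q m else q (m + d) with hq'def
          have hq' : BPath E s t (k - d) q' := by
            constructor
            · intro m hm
              by_cases h : m < a
              · simp only [hq'def, if_pos h]
                exact hq.1 m (by omega)
              · simp only [hq'def, if_neg h]
                exact hq.1 (m + d) (by omega)
            · intro i hi
              by_cases h1 : i + 1 < a
              · simp only [hq'def, if_pos h1, if_pos (by omega : i < a)]
                exact hq.2 i (by omega)
              · by_cases h2 : i + 1 = a
                · simp only [hq'def, if_neg (by omega : ¬ i + 1 < a), if_pos (by omega : i < a)]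
                  have hb : i + 1 + d = b := by omega
                  rw [hb, ← hsab, ← h2]
                  exact hq.2 i (by omega)
                · simp only [hq'def, if_neg (by omega : ¬ i + 1 < a),
                    if_neg (by omega : ¬ i < a)]
                  have : i + 1 + d = (i + d) + 1 := by omega
                  rw [this]
                  exact hq.2 (i + d) (by omega)
          -- the removed segment is a cycle
          have hseg : (∑ m ∈ Finset.Ico a b, (c (q m) - lam)) ≤ 0 := by
            have h1 := hcyc (b - a) (fun m => q (a + m)) (by omega)
              ⟨fun m hm => hq.1 (a + m) (by omega), fun m hm => by
                show s (q (a + (m + 1))) = t (q (a + m))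
                have : a + (m + 1) = (a + m) + 1 := by omega
                rw [this]
                exact hq.2 (a + m) (by omega)⟩
              (by
                show s (q (a + 0)) = t (q (a + (b - a - 1)))
                have he : a + (b - a - 1) = b - 1 := by omega
                have h2 := hq.2 (b - 1) (by omega)
                rw [Nat.add_zero, he, hsab]
                have : b - 1 + 1 = b := by omega
                rw [this] at h2
                exact h2)
            rw [Finset.sum_Ico_eq_sum_range]
            exact h1
          -- value of the shortened path
          have hval : (∑ m ∈ Finset.range (k - d), (c (q' m) - lam)) =
              (∑ m ∈ Finset.range k, (c (q m) - lam)) -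
                (∑ m ∈ Finset.Ico a b, (c (q m) - lam)) := by
            have e1 : (∑ m ∈ Finset.range (k - d), (c (q' m) - lam)) =
                (∑ m ∈ Finset.Ico 0 a, (c (q' m) - lam)) +
                  ∑ m ∈ Finset.Ico a (k - d), (c (q' m) - lam) := by
              rw [Finset.sum_Ico_consecutive _ (by omega) (by omega), ← Finset.range_eq_Ico]
            have e2 : (∑ m ∈ Finset.Ico 0 a, (c (q' m) - lam)) =
                ∑ m ∈ Finset.Ico 0 a, (c (q m) - lam) := by
              apply Finset.sum_congr rfl
              intro m hm
              have : m < a := (Finset.mem_Ico.mp hm).2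
              simp [hq'def, this]
            have e3 : (∑ m ∈ Finset.Ico a (k - d), (c (q' m) - lam)) =
                ∑ m ∈ Finset.Ico b k, (c (q m) - lam) := by
              rw [Finset.sum_Ico_eq_sum_range, Finset.sum_Ico_eq_sum_range]
              have hkk : k - d - a = k - b := by omega
              rw [hkk]
              apply Finset.sum_congr rfl
              intro m hm
              simp only [hq'def, if_neg (by omega : ¬ a + m < a)]
              have : a + m + d = b + m := by omega
              rw [this]
            have e4 : (∑ m ∈ Finset.range k, (c (q m) - lam)) =
                ((∑ m ∈ Finset.Ico 0 a, (c (q m) - lam)) +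
                  ∑ m ∈ Finset.Ico a b, (c (q m) - lam)) +
                  ∑ m ∈ Finset.Ico b k, (c (q m) - lam) := by
              rw [Finset.sum_Ico_consecutive _ (by omega) (by omega),
                Finset.sum_Ico_consecutive _ (by omega) (by omega), ← Finset.range_eq_Ico]
            rw [e1, e2, e3, e4]
            ring
          have hless := ih (k - d) (by omega) q' hq'
          rw [hval] at hless
          linarith
        obtain ⟨i, j, hne, hij⟩ := Fintype.exists_ne_map_eq_of_card_lt
          (fun i : Fin k => s (q i)) (by simpa using hk)
        rcases hne.lt_or_gt with h | h
        · exact key i j h j.isLt hij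
        · exact key j i h i.isLt hij.symm
  -- the Bellman potential
  set Vals : V → Set ℝ := fun v => {m | ∃ k q, BPath E s t k q ∧
    (1 ≤ k → t (q (k - 1)) = v) ∧ m = ∑ i ∈ Finset.range k, (c (q i) - lam)} with hValsdef
  have h0 : ∀ v, (0 : ℝ) ∈ Vals v := by
    intro v
    exact ⟨0, fun _ => w0, ⟨fun i hi => absurd hi (by omega), fun i hi => absurd hi (by omega)⟩,
      fun h => absurd h (by omega), by simp⟩
  have hbdd : ∀ v, BddAbove (Vals v) := by
    intro v
    refine ⟨(Fintype.card V : ℝ) * C, ?_⟩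
    rintro m ⟨k, q, hq, -, rfl⟩
    exact hbound k q hq
  refine ⟨fun v => sSup (Vals v), fun e he => ?_⟩
  have key : ∀ m ∈ Vals (s e), m ≤ sSup (Vals (t e)) - (c e - lam) := by
    rintro m ⟨k, q, hq, hend, rfl⟩
    set q' : ℕ → W := fun i => if i < k then q i else e with hq'def
    have hq' : BPath E s t (k + 1) q' := by
      constructor
      · intro i hi
        by_cases h : i < k
        · simp only [hq'def, if_pos h]; exact hq.1 i h
        · simp only [hq'def, if_neg h]; exact he
      · intro i hi
        by_cases h : i + 1 < k
        · simp only [hq'def, if_pos h, if_pos (by omega : i < k)]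
          exact hq.2 i h
        · have hik : i + 1 = k := by omega
          simp only [hq'def, if_neg (by omega : ¬ i + 1 < k), if_pos (by omega : i < k)]
          have := hend (by omega)
          have hi1 : k - 1 = i := by omega
          rw [hi1] at this
          exact this.symm
    have hval : (∑ i ∈ Finset.range (k + 1), (c (q' i) - lam)) =
        (∑ i ∈ Finset.range k, (c (q i) - lam)) + (c e - lam) := by
      rw [Finset.sum_range_succ]
      congr 1
      · apply Finset.sum_congr rfl
        intro i hi
        have : i < k := Finset.mem_range.mp hi
        simp [hq'def, this]
      · simp [hq'def]
    have hmem : (∑ i ∈ Finset.range k, (c (q i) - lam)) + (c e - lam) ∈ Vals (t e) := by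
      refine ⟨k + 1, q', hq', fun _ => ?_, hval.symm⟩
      simp [hq'def]
    have := le_csSup (hbdd (t e)) hmem
    linarith
  have hfin : sSup (Vals (s e)) ≤ sSup (Vals (t e)) - (c e - lam) :=
    csSup_le ⟨0, h0 _⟩ key
  linarith

end Bellman

end DFP

namespace DFP

open Finset MeasureTheory

variable {r : ℕ} {M : Fin r → Fin r → Bool}

lemma nonempty_of_holonomic {μ : Measure (NatExt r M)} (hμ : Holonomic μ) :
    Nonempty (NatExt r M) := by
  by_contra h
  rw [not_nonempty_iff] at h
  have h1 := hμ.1.measure_univ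
  rw [Set.univ_eq_empty_iff.mpr h] at h1
  simp at h1

lemma betaA_bddAbove (A : NatExt r M → ℝ) {CA : ℝ} (hCA : ∀ p, |A p| ≤ CA) :
    BddAbove (Set.range fun μ : {μ : Measure (NatExt r M) // Holonomic μ} =>
      ∫ p, A p ∂(μ.1)) := by
  refine ⟨CA, ?_⟩
  rintro x ⟨μ, rfl⟩
  haveI := μ.2.1
  calc ∫ p, A p ∂(μ.1) ≤ |∫ p, A p ∂(μ.1)| := le_abs_self _
    _ ≤ CA := by
      have h := norm_integral_le_of_norm_le_const (μ := μ.1) (f := A) (C := CA)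
        (Filter.Eventually.of_forall fun p => by simpa using hCA p)
      simpa [μ.2.1.measure_univ, Real.norm_eq_abs] using h

lemma easy_bound (A : NatExt r M → ℝ) (hA : Continuous A) (f : C(SigSp r M, ℝ))
    {μ : Measure (NatExt r M)} (hμ : Holonomic μ) :
    ∫ p, A p ∂μ ≤ ⨆ p : NatExt r M, (A p + f (proj1 p) - f (tau p)) := by
  haveI := hμ.1
  haveI : Nonempty (NatExt r M) := nonempty_of_holonomic hμ
  have hcg : Continuous fun p : NatExt r M => A p + f (proj1 p) - f (tau p) :=
    (hA.add (f.continuous.comp cont_proj1)).sub (f.continuous.comp cont_tau)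
  have hbdd : BddAbove (Set.range fun p : NatExt r M => A p + f (proj1 p) - f (tau p)) :=
    (isCompact_range hcg).bddAbove
  have hi1 : Integrable (fun p : NatExt r M => A p) μ := cont_integrable hA μ
  have hi2 : Integrable (fun p : NatExt r M => f (proj1 p)) μ :=
    cont_integrable (f.continuous.comp cont_proj1) μ
  have hi3 : Integrable (fun p : NatExt r M => f (tau p)) μ :=
    cont_integrable (f.continuous.comp cont_tau) μ
  have hi12 : Integrable (fun p : NatExt r M => A p + f (proj1 p)) μ :=
    cont_integrable (hA.add (f.continuous.comp cont_proj1)) μ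
  have h1 : ∫ p, (A p + f (proj1 p) - f (tau p)) ∂μ = ∫ p, A p ∂μ := by
    have e1 : ∫ p, (A p + f (proj1 p) - f (tau p)) ∂μ
        = (∫ p, (A p + f (proj1 p)) ∂μ) - ∫ p, f (tau p) ∂μ := integral_sub hi12 hi3
    have e2 : ∫ p, (A p + f (proj1 p)) ∂μ
        = (∫ p, A p ∂μ) + ∫ p, f (proj1 p) ∂μ := integral_add hi1 hi2
    rw [e1, e2, hμ.2 f]
    ring
  rw [← h1]
  calc ∫ p, (A p + f (proj1 p) - f (tau p)) ∂μ
      ≤ ∫ _p, (⨆ p : NatExt r M, (A p + f (proj1 p) - f (tau p))) ∂μ :=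
        integral_mono (cont_integrable hcg μ) (integrable_const _)
          (fun p => le_ciSup hbdd p)
    _ = ⨆ p : NatExt r M, (A p + f (proj1 p) - f (tau p)) := by
        simp [hμ.1.measure_univ]

lemma empty_case (A : NatExt r M → ℝ) (h : IsEmpty (NatExt r M)) :
    betaA A = ⨅ f : C(SigSp r M, ℝ), ⨆ p : NatExt r M, (A p + f (proj1 p) - f (tau p)) := by
  haveI : Nonempty C(SigSp r M, ℝ) := ⟨0⟩
  have h1 : betaA A = 0 := by
    haveI : IsEmpty {μ : Measure (NatExt r M) // Holonomic μ} := by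
      constructor
      rintro ⟨μ, hμ⟩
      exact (not_nonempty_iff.mpr h) (nonempty_of_holonomic hμ)
    exact Real.iSup_of_isEmpty _
  have h2 : ∀ f : C(SigSp r M, ℝ),
      (⨆ p : NatExt r M, (A p + f (proj1 p) - f (tau p))) = 0 := fun f =>
    Real.iSup_of_isEmpty _
  rw [h1]
  simp only [h2]
  rw [ciInf_const]

lemma main_nonempty (A : NatExt r M → ℝ) (hA : Continuous A) [hne : Nonempty (NatExt r M)] :
    betaA A = ⨅ f : C(SigSp r M, ℝ), ⨆ p : NatExt r M, (A p + f (proj1 p) - f (tau p)) := by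
  -- a bound for A
  obtain ⟨CA, hCA0, hCA⟩ : ∃ CA : ℝ, 0 ≤ CA ∧ ∀ p, |A p| ≤ CA := by
    obtain ⟨C, hC⟩ := (isCompact_range hA.norm).bddAbove
    exact ⟨max C 0, le_max_right _ _, fun p =>
      le_trans (le_max_left _ _ |>.trans' (by
        simpa [Real.norm_eq_abs] using hC (Set.mem_range_self p))) le_rfl⟩
  have hbA := betaA_bddAbove A hCA
  -- a holonomic measure exists
  obtain ⟨N₀, hN₀⟩ := exists_window A hA one_pos
  obtain ⟨k₀, q₀, hcyc₀⟩ := exists_cyc (M := M) N₀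
  obtain ⟨μ₀, hμ₀, -⟩ := cyc_measure A hA hN₀ hcyc₀
  haveI : Nonempty {μ : Measure (NatExt r M) // Holonomic μ} := ⟨⟨μ₀, hμ₀⟩⟩
  apply le_antisymm
  · -- easy direction
    apply le_ciInf
    intro f
    exact ciSup_le fun μ => easy_bound A hA f μ.2
  · -- hard direction
    apply le_of_forall_pos_le_add
    intro ε hε
    obtain ⟨N, hN⟩ := exists_window A hA (half_pos hε)
    set c := wgt A N with hcdef
    set MS : Set ℝ := {m | ∃ k q, IsCyc M N k q ∧
      m = (∑ i ∈ Finset.range k, c (q i)) / k} with hMSdef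
    have hMSne : MS.Nonempty := by
      obtain ⟨k, q, h⟩ := exists_cyc (M := M) N
      exact ⟨_, k, q, h, rfl⟩
    have hMSbdd : BddAbove MS := by
      refine ⟨CA, ?_⟩
      rintro m ⟨k, q, hcy, rfl⟩
      have hkpos : (0 : ℝ) < k := by
        have := hcy.1; positivity
      rw [div_le_iff₀ hkpos]
      calc (∑ i ∈ Finset.range k, c (q i)) ≤ ∑ _i ∈ Finset.range k, CA :=
            Finset.sum_le_sum fun i _ => (abs_le.mp (wgt_bound hCA hCA0 _)).2
        _ = (k : ℝ) * CA := by rw [Finset.sum_const, Finset.card_range, nsmul_eq_mul]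
        _ = CA * k := by ring
    set lam := sSup MS with hlamdef
    have hlam_le : lam ≤ betaA A + ε / 2 := by
      apply csSup_le hMSne
      rintro m ⟨k, q, hcy, rfl⟩
      obtain ⟨μ, hμ, hint⟩ := cyc_measure A hA hN hcy
      have hle : ∫ p, A p ∂μ ≤ betaA A := le_ciSup hbA ⟨μ, hμ⟩
      have : (∑ i ∈ Finset.range k, c (q i)) / k - ε / 2 ≤ ∫ p, A p ∂μ := hint
      linarith
    have hcycsum : ∀ k (q : ℕ → Wrd r N), 1 ≤ k →
        BPath (ESet M N) wsrc wtgt k q → wsrc (q 0) = wtgt (q (k - 1)) →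
        (∑ i ∈ Finset.range k, (c (q i) - lam)) ≤ 0 := by
      intro k q hk hp hcl
      have hmem : ((∑ i ∈ Finset.range k, c (q i)) / k) ∈ MS :=
        ⟨k, q, ⟨hk, hp.1, hp.2, hcl⟩, rfl⟩
      have hle := le_csSup hMSbdd hmem
      have hkpos : (0 : ℝ) < k := by positivity
      rw [div_le_iff₀ hkpos] at hle
      have hdist : (∑ i ∈ Finset.range k, (c (q i) - lam))
          = (∑ i ∈ Finset.range k, c (q i)) - k * lam := by
        rw [Finset.sum_sub_distrib, Finset.sum_const, Finset.card_range, nsmul_eq_mul]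
      rw [hdist]
      linarith
    obtain ⟨g, hg⟩ := bellman (ESet M N) wsrc wtgt c lam (CA + |lam|)
      (Wdw N (Classical.arbitrary (NatExt r M)))
      (by positivity)
      (fun e _ => by
        have h1 := (abs_le.mp (wgt_bound hCA hCA0 e)).2
        have h2 := neg_abs_le lam
        simp only [← hcdef] at h1
        linarith)
      (fun k q hk hp hcl => hcycsum k q hk hp hcl)
    set f₀ : C(SigSp r M, ℝ) :=
      ⟨fun x => g (fstW N x), continuous_of_discreteTopology.comp (cont_fstW N)⟩ with hf₀def
    have hsup : (⨆ p : NatExt r M, (A p + f₀ (proj1 p) - f₀ (tau p))) ≤ lam + ε / 2 := by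
      apply ciSup_le
      intro p
      have h1 : f₀ (proj1 p) = g (wsrc (Wdw N p)) := congrArg g (fstW_proj1 N p)
      have h2 : f₀ (tau p) = g (wtgt (Wdw N p)) := congrArg g (fstW_tau N p)
      have h3 : A p ≤ c (Wdw N p) + ε / 2 := by
        have := (abs_le.mp (wgt_close hN p)).1
        simp only [← hcdef] at this
        linarith
      have h4 := hg (Wdw N p) (Set.mem_range_self p)
      rw [h1, h2]
      linarith
    have hinf_le : (⨅ f : C(SigSp r M, ℝ),
        ⨆ p : NatExt r M, (A p + f (proj1 p) - f (tau p))) ≤ lam + ε / 2 := by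
      refine le_trans (ciInf_le ?_ f₀) hsup
      refine ⟨∫ p, A p ∂μ₀, ?_⟩
      rintro x ⟨f, rfl⟩
      exact easy_bound A hA f hμ₀
    calc (⨅ f : C(SigSp r M, ℝ),
        ⨆ p : NatExt r M, (A p + f (proj1 p) - f (tau p))) ≤ lam + ε / 2 := hinf_le
      _ ≤ betaA A + ε := by linarith

end DFP


/-- the dual formula
`β_A = inf_{f ∈ C⁰(Σ)} max_{(y,x) ∈ Σ̂} [A(y,x) + f(x) − f(τ_y(x))]`. -/
theorem dual_formula
    {r : ℕ} {M : Fin r → Fin r → Bool}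
    (A : NatExt r M → ℝ) (hA : Continuous A) :
    betaA A =
      ⨅ f : C(SigSp r M, ℝ), ⨆ p : NatExt r M, (A p + f (proj1 p) - f (tau p)) := by
  by_cases hne : Nonempty (NatExt r M)
  · haveI := hne
    exact DFP.main_nonempty A hA
  · exact DFP.empty_case A (not_nonempty_iff.mp hne)
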